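/- arXiv:2102.06575 — 3 statements merged into one kernel-verified Lean document; each statement's English description precedes it below -/
import Mathlib

section
/- The BQR loss z ↦ L(y,z), where L(y,z) = -(y·log p(z) + (1-y)·log(1 - p(z))) with p(z) = 1 - τ·exp((τ-1)z) for z ≥ 0 and p(z) = (1-τ)·exp(τz) for z < 0, is Lipschitz continuous on ℝ with Lipschitz constant max(τ, 1-τ), for each y ∈ {0,1}. -/
open Real

lemma aux_lip (σ : ℝ) (h0 : 0 < σ) (h1 : σ < 1) (a b : ℝ) (ha : a ≤ 0) (hb : b ≤ 0) :
    |Real.log (1 - (1 - σ) * Real.exp (σ * b)) - Real.log (1 - (1 - σ) * Real.exp (σ * a))|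
      ≤ (1 - σ) * |b - a| := by
  set f : ℝ → ℝ := fun z => Real.log (1 - (1 - σ) * Real.exp (σ * z)) with hf
  set f' : ℝ → ℝ := fun z =>
    (-(1 - σ) * σ * Real.exp (σ * z)) / (1 - (1 - σ) * Real.exp (σ * z)) with hf'
  have hexp : ∀ z ∈ Set.Iic (0:ℝ), Real.exp (σ * z) ≤ 1 := by
    intro z hz
    have : σ * z ≤ 0 := mul_nonpos_of_nonneg_of_nonpos h0.le hz
    simpa using Real.exp_le_one_iff.mpr this
  have hpos : ∀ z ∈ Set.Iic (0:ℝ), 0 < 1 - (1 - σ) * Real.exp (σ * z) := by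
    intro z hz
    have h1' := hexp z hz
    nlinarith [Real.exp_pos (σ * z)]
  have hderiv : ∀ z ∈ Set.Iic (0:ℝ), HasDerivWithinAt f (f' z) (Set.Iic 0) z := by
    intro z hz
    have hσ : HasDerivAt (fun z : ℝ => σ * z) σ z := by
      simpa using (hasDerivAt_id z).const_mul σ
    have h2 : HasDerivAt (fun z => 1 - (1 - σ) * Real.exp (σ * z))
        (-(1 - σ) * σ * Real.exp (σ * z)) z := by
      have h3 := (((Real.hasDerivAt_exp (σ * z)).comp z hσ).const_mul (1 - σ)).const_sub 1
      exact h3.congr_deriv (by ring)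
    exact (h2.log (ne_of_gt (hpos z hz))).hasDerivWithinAt
  have hbound : ∀ z ∈ Set.Iic (0:ℝ), ‖f' z‖ ≤ 1 - σ := by
    intro z hz
    have hd := hpos z hz
    have he := hexp z hz
    have hep := Real.exp_pos (σ * z)
    rw [Real.norm_eq_abs, abs_le]
    constructor
    · rw [hf', le_div_iff₀ hd]
      nlinarith
    · rw [hf', div_le_iff₀ hd]
      nlinarith [mul_pos (show (0:ℝ) < 1 - σ by linarith) hd,
        mul_pos (mul_pos (show (0:ℝ) < 1 - σ by linarith) h0) hep]
  have := (convex_Iic (0:ℝ)).norm_image_sub_le_of_norm_hasDerivWithin_le hderiv hbound ha hb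
  simpa [Real.norm_eq_abs] using this

theorem bqr_loss_lipschitz (τ : ℝ) (hτ : τ ∈ Set.Ioo (0:ℝ) 1)
    (p : ℝ → ℝ)
    (hp : ∀ z, p z = if 0 ≤ z then 1 - τ * Real.exp ((τ - 1) * z)
                     else (1 - τ) * Real.exp (τ * z))
    (L : ℝ → ℝ → ℝ)
    (hL : ∀ y z, L y z = -(y * Real.log (p z) + (1 - y) * Real.log (1 - p z)))
    (y : ℝ) (hy : y = 0 ∨ y = 1) :
    ∀ z₁ z₂ : ℝ, |L y z₂ - L y z₁| ≤ max τ (1 - τ) * |z₂ - z₁| := by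
  obtain ⟨hτ0, hτ1⟩ := hτ
  set K := max τ (1 - τ) with hK
  have hτK : τ ≤ K := le_max_left _ _
  have h1τK : 1 - τ ≤ K := le_max_right _ _
  -- explicit values of p on each side
  have hppos : ∀ z, 0 ≤ z → p z = 1 - τ * Real.exp ((τ - 1) * z) := by
    intro z hz; rw [hp z, if_pos hz]
  have hpneg : ∀ z, z ≤ 0 → p z = (1 - τ) * Real.exp (τ * z) := by
    intro z hz
    rcases lt_or_eq_of_le hz with h | h
    · rw [hp z, if_neg (not_le.mpr h)]
    · subst h; rw [hp 0, if_pos le_rfl]; simp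
  -- key lemma on each half line
  have key : ∀ z₁ z₂ : ℝ, (0 ≤ z₁ ∧ 0 ≤ z₂) ∨ (z₁ ≤ 0 ∧ z₂ ≤ 0) →
      |L y z₂ - L y z₁| ≤ K * |z₂ - z₁| := by
    rintro z₁ z₂ (⟨h₁, h₂⟩ | ⟨h₁, h₂⟩)
    · -- both nonneg
      rcases hy with rfl | rfl
      · -- y = 0 : L = -(log τ + (τ-1) z), linear
        have hval : ∀ z, 0 ≤ z → L 0 z = -(Real.log τ + (τ - 1) * z) := by
          intro z hz
          rw [hL, hppos z hz]
          have : (1:ℝ) - (1 - τ * Real.exp ((τ - 1) * z)) = τ * Real.exp ((τ - 1) * z) := by ring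
          rw [this, Real.log_mul (ne_of_gt hτ0) (Real.exp_ne_zero _), Real.log_exp]
          ring
        rw [hval z₁ h₁, hval z₂ h₂]
        have : -(Real.log τ + (τ - 1) * z₂) - -(Real.log τ + (τ - 1) * z₁)
            = (1 - τ) * (z₂ - z₁) := by ring
        rw [this, abs_mul, abs_of_pos (by linarith)]
        exact mul_le_mul_of_nonneg_right h1τK (abs_nonneg _)
      · -- y = 1 : use aux_lip with σ = 1 - τ
        have hval : ∀ z, 0 ≤ z →
            L 1 z = -Real.log (1 - (1 - (1 - τ)) * Real.exp ((1 - τ) * (-z))) := by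
          intro z hz
          rw [hL, hppos z hz]
          ring_nf
        rw [hval z₁ h₁, hval z₂ h₂]
        have h := aux_lip (1 - τ) (by linarith) (by linarith) (-z₁) (-z₂)
          (by linarith) (by linarith)
        have habs : |(-z₂) - (-z₁)| = |z₂ - z₁| := by rw [← abs_neg]; ring_nf
        calc |(-Real.log (1 - (1 - (1 - τ)) * Real.exp ((1 - τ) * (-z₂))))
              - (-Real.log (1 - (1 - (1 - τ)) * Real.exp ((1 - τ) * (-z₁))))|
            = |Real.log (1 - (1 - (1 - τ)) * Real.exp ((1 - τ) * (-z₂)))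
              - Real.log (1 - (1 - (1 - τ)) * Real.exp ((1 - τ) * (-z₁)))| := by
              rw [← abs_neg]; ring_nf
          _ ≤ (1 - (1 - τ)) * |(-z₂) - (-z₁)| := h
          _ = τ * |z₂ - z₁| := by rw [habs]; ring
          _ ≤ K * |z₂ - z₁| := mul_le_mul_of_nonneg_right hτK (abs_nonneg _)
    · -- both nonpos
      rcases hy with rfl | rfl
      · -- y = 0 : use aux_lip with σ = τ
        have hval : ∀ z, z ≤ 0 → L 0 z = -Real.log (1 - (1 - τ) * Real.exp (τ * z)) := by
          intro z hz
          rw [hL, hpneg z hz]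
          ring_nf
        rw [hval z₁ h₁, hval z₂ h₂]
        have h := aux_lip τ hτ0 hτ1 z₁ z₂ h₁ h₂
        calc |(-Real.log (1 - (1 - τ) * Real.exp (τ * z₂)))
              - (-Real.log (1 - (1 - τ) * Real.exp (τ * z₁)))|
            = |Real.log (1 - (1 - τ) * Real.exp (τ * z₂))
              - Real.log (1 - (1 - τ) * Real.exp (τ * z₁))| := by
              rw [← abs_neg]; ring_nf
          _ ≤ (1 - τ) * |z₂ - z₁| := h
          _ ≤ K * |z₂ - z₁| := mul_le_mul_of_nonneg_right h1τK (abs_nonneg _)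
      · -- y = 1 : linear
        have hval : ∀ z, z ≤ 0 → L 1 z = -(Real.log (1 - τ) + τ * z) := by
          intro z hz
          rw [hL, hpneg z hz,
            Real.log_mul (by linarith : (1:ℝ) - τ ≠ 0) (Real.exp_ne_zero _), Real.log_exp]
          ring
        rw [hval z₁ h₁, hval z₂ h₂]
        have : -(Real.log (1 - τ) + τ * z₂) - -(Real.log (1 - τ) + τ * z₁)
            = (-τ) * (z₂ - z₁) := by ring
        rw [this, abs_mul, abs_neg, abs_of_pos hτ0]
        exact mul_le_mul_of_nonneg_right hτK (abs_nonneg _)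
  intro z₁ z₂
  rcases le_or_gt 0 z₁ with h₁ | h₁ <;> rcases le_or_gt 0 z₂ with h₂ | h₂
  · exact key z₁ z₂ (Or.inl ⟨h₁, h₂⟩)
  · -- z₂ < 0 ≤ z₁ : go through 0
    have a := key 0 z₂ (Or.inr ⟨le_rfl, h₂.le⟩)
    have b := key z₁ 0 (Or.inl ⟨h₁, le_rfl⟩)
    have : |L y z₂ - L y z₁| ≤ |L y z₂ - L y 0| + |L y 0 - L y z₁| := by
      have := abs_sub_le (L y z₂) (L y 0) (L y z₁)
      linarith [abs_sub_comm (L y z₂) (L y z₁)]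
    have hsum : |z₂ - 0| + |0 - z₁| = |z₂ - z₁| := by
      rw [abs_of_nonpos (by linarith : z₂ - 0 ≤ 0), abs_of_nonpos (by linarith : 0 - z₁ ≤ 0),
        abs_of_nonpos (by linarith : z₂ - z₁ ≤ 0)]
      ring
    calc |L y z₂ - L y z₁| ≤ |L y z₂ - L y 0| + |L y 0 - L y z₁| := this
      _ ≤ K * |z₂ - 0| + K * |0 - z₁| := add_le_add a (by
          have := abs_sub_comm (L y 0) (L y z₁)
          rw [this]
          calc |L y z₁ - L y 0| = |L y 0 - L y z₁| := (abs_sub_comm _ _)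
            _ ≤ K * |0 - z₁| := by
              have := key z₁ 0 (Or.inl ⟨h₁, le_rfl⟩)
              simpa [abs_sub_comm] using this)
      _ = K * (|z₂ - 0| + |0 - z₁|) := by ring
      _ = K * |z₂ - z₁| := by rw [hsum]
  · -- z₁ < 0 ≤ z₂
    have a := key z₁ 0 (Or.inr ⟨h₁.le, le_rfl⟩)
    have b := key 0 z₂ (Or.inl ⟨le_rfl, h₂⟩)
    have htri : |L y z₂ - L y z₁| ≤ |L y z₂ - L y 0| + |L y 0 - L y z₁| :=
      abs_sub_le _ _ _
    have hsum : |z₂ - 0| + |0 - z₁| = |z₂ - z₁| := by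
      rw [abs_of_nonneg (by linarith : (0:ℝ) ≤ z₂ - 0),
        abs_of_nonneg (by linarith : (0:ℝ) ≤ 0 - z₁),
        abs_of_nonneg (by linarith : (0:ℝ) ≤ z₂ - z₁)]
      ring
    calc |L y z₂ - L y z₁| ≤ |L y z₂ - L y 0| + |L y 0 - L y z₁| := htri
      _ ≤ K * |z₂ - 0| + K * |0 - z₁| := add_le_add b a
      _ = K * (|z₂ - 0| + |0 - z₁|) := by ring
      _ = K * |z₂ - z₁| := by rw [hsum]
  · exact key z₁ z₂ (Or.inr ⟨h₁.le, h₂.le⟩)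
end

section
/- Expected excess risk curvature bound: there exist constants c₁, c₂ > 0 depending only on τ ∈ (0,1) and M > 0 such that for all f, f* ∈ [-M, M], c₁·(f - f*)² ≤ E_y[L(y,f) - L(y,f*)] ≤ c₂·(f - f*)², where y is Bernoulli with P(y=1) = p(f*), p is the BQR link, and L is the BQR loss; moreover one may take c₂ = τ(1-τ)/2. -/
open Real Set

namespace BQRaux

noncomputable def P (τ z : ℝ) : ℝ :=
  if 0 ≤ z then 1 - τ * Real.exp ((τ - 1) * z) else (1 - τ) * Real.exp (τ * z)

noncomputable def P' (τ z : ℝ) : ℝ :=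
  if 0 ≤ z then τ * (1 - τ) * Real.exp ((τ - 1) * z)
  else τ * (1 - τ) * Real.exp (τ * z)

variable {τ : ℝ}

lemma P_pos (hτ : τ ∈ Set.Ioo (0:ℝ) 1) (z : ℝ) : 0 < P τ z := by
  obtain ⟨h0, h1⟩ := hτ
  unfold P
  split_ifs with hz
  · have he : Real.exp ((τ - 1) * z) ≤ 1 := by
      rw [Real.exp_le_one_iff]
      nlinarith
    nlinarith
  · nlinarith [Real.exp_pos (τ * z)]

lemma P_lt_one (hτ : τ ∈ Set.Ioo (0:ℝ) 1) (z : ℝ) : P τ z < 1 := by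
  obtain ⟨h0, h1⟩ := hτ
  unfold P
  split_ifs with hz
  · nlinarith [Real.exp_pos ((τ - 1) * z)]
  · have he : Real.exp (τ * z) < 1 := by
      rw [Real.exp_lt_one_iff]
      nlinarith [lt_of_not_ge hz]
    nlinarith

lemma P'_pos (hτ : τ ∈ Set.Ioo (0:ℝ) 1) (z : ℝ) : 0 < P' τ z := by
  obtain ⟨h0, h1⟩ := hτ
  unfold P'
  split_ifs
  · exact mul_pos (mul_pos h0 (by linarith)) (Real.exp_pos _)
  · exact mul_pos (mul_pos h0 (by linarith)) (Real.exp_pos _)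

lemma P'_le (hτ : τ ∈ Set.Ioo (0:ℝ) 1) (z : ℝ) : P' τ z ≤ τ * (1 - τ) := by
  obtain ⟨h0, h1⟩ := hτ
  unfold P'
  split_ifs with hz
  · have he : Real.exp ((τ - 1) * z) ≤ 1 := by
      rw [Real.exp_le_one_iff]; nlinarith
    nlinarith [mul_nonneg (mul_nonneg h0.le (by linarith : (0:ℝ) ≤ 1 - τ))
      (sub_nonneg.mpr he)]
  · have he : Real.exp (τ * z) ≤ 1 := by
      rw [Real.exp_le_one_iff]; nlinarith [lt_of_not_ge hz]
    nlinarith [mul_nonneg (mul_nonneg h0.le (by linarith : (0:ℝ) ≤ 1 - τ))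
      (sub_nonneg.mpr he)]

lemma P'_le_P_mul (hτ : τ ∈ Set.Ioo (0:ℝ) 1) (z : ℝ) :
    P' τ z ≤ P τ z * (1 - P τ z) := by
  obtain ⟨h0, h1⟩ := hτ
  unfold P P'
  split_ifs with hz
  · have he : Real.exp ((τ - 1) * z) ≤ 1 := by
      rw [Real.exp_le_one_iff]; nlinarith
    nlinarith [mul_nonneg (mul_nonneg (mul_pos h0 h0).le
      (Real.exp_pos ((τ - 1) * z)).le) (sub_nonneg.mpr he)]
  · have he : Real.exp (τ * z) ≤ 1 := by
      rw [Real.exp_le_one_iff]; nlinarith [lt_of_not_ge hz]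
    nlinarith [mul_nonneg (mul_nonneg (mul_pos (by linarith : (0:ℝ) < 1 - τ)
      (by linarith : (0:ℝ) < 1 - τ)).le (Real.exp_pos (τ * z)).le)
      (sub_nonneg.mpr he)]

lemma P'_ge (hτ : τ ∈ Set.Ioo (0:ℝ) 1) {M z : ℝ} (hz : |z| ≤ M) :
    τ * (1 - τ) * Real.exp (-M) ≤ P' τ z := by
  obtain ⟨h0, h1⟩ := hτ
  obtain ⟨hz1, hz2⟩ := abs_le.mp hz
  have hpos : (0:ℝ) ≤ τ * (1 - τ) := by nlinarith
  unfold P'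
  split_ifs with hzz
  · have h : Real.exp (-M) ≤ Real.exp ((τ - 1) * z) := by
      rw [Real.exp_le_exp]; nlinarith
    exact mul_le_mul_of_nonneg_left h hpos
  · have h : Real.exp (-M) ≤ Real.exp (τ * z) := by
      rw [Real.exp_le_exp]; nlinarith [lt_of_not_ge hzz]
    exact mul_le_mul_of_nonneg_left h hpos

lemma hasDerivAt_P (τ z : ℝ) : HasDerivAt (P τ) (P' τ z) z := by
  have hR : ∀ x : ℝ, HasDerivAt (fun y => 1 - τ * Real.exp ((τ - 1) * y))
      (τ * (1 - τ) * Real.exp ((τ - 1) * x)) x := by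
    intro x
    have h1 : HasDerivAt (fun y : ℝ => (τ - 1) * y) (τ - 1) x := by
      simpa using (hasDerivAt_id x).const_mul (τ - 1)
    have h2 := h1.exp
    have h3 := (h2.const_mul τ).const_sub 1
    refine h3.congr_deriv ?_
    ring
  have hL : ∀ x : ℝ, HasDerivAt (fun y => (1 - τ) * Real.exp (τ * y))
      (τ * (1 - τ) * Real.exp (τ * x)) x := by
    intro x
    have h1 : HasDerivAt (fun y : ℝ => τ * y) τ x := by
      simpa using (hasDerivAt_id x).const_mul τ
    have h2 := (h1.exp).const_mul (1 - τ)
    refine h2.congr_deriv ?_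
    ring
  rcases lt_trichotomy z 0 with hz | hz | hz
  · have heq : P τ =ᶠ[nhds z] (fun y => (1 - τ) * Real.exp (τ * y)) := by
      filter_upwards [Iio_mem_nhds hz] with x hx
      simp [P, not_le.mpr (mem_Iio.mp hx)]
    have hv : P' τ z = τ * (1 - τ) * Real.exp (τ * z) := by
      simp [P', not_le.mpr hz]
    rw [hv]
    exact (hL z).congr_of_eventuallyEq heq
  · subst hz
    have hRdwi : HasDerivWithinAt (P τ) (τ * (1 - τ)) (Set.Ici 0) 0 := by
      have h := ((hR 0).hasDerivWithinAt (s := Set.Ici (0:ℝ)))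
      simp only [mul_zero, Real.exp_zero, mul_one] at h
      refine h.congr (fun x hx => ?_) (by simp [P])
      simp [P, mem_Ici.mp hx]
    have hLdwi : HasDerivWithinAt (P τ) (τ * (1 - τ)) (Set.Iic 0) 0 := by
      have h := ((hL 0).hasDerivWithinAt (s := Set.Iic (0:ℝ)))
      simp only [mul_zero, Real.exp_zero, mul_one] at h
      refine h.congr (fun x hx => ?_) (by simp [P])
      rcases eq_or_lt_of_le (mem_Iic.mp hx) with h | h
      · subst h; simp [P]
      · simp [P, not_le.mpr h]
    have h := hLdwi.union hRdwi
    rw [Set.Iic_union_Ici] at h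
    have h' : P' τ 0 = τ * (1 - τ) := by simp [P']
    rw [h']
    exact h.hasDerivAt Filter.univ_mem
  · have heq : P τ =ᶠ[nhds z] (fun y => 1 - τ * Real.exp ((τ - 1) * y)) := by
      filter_upwards [Ioi_mem_nhds hz] with x hx
      simp [P, le_of_lt (mem_Ioi.mp hx)]
    have hv : P' τ z = τ * (1 - τ) * Real.exp ((τ - 1) * z) := by
      simp [P', le_of_lt hz]
    rw [hv]
    exact (hR z).congr_of_eventuallyEq heq

noncomputable def G (τ a f : ℝ) : ℝ :=
  -(a * Real.log (P τ f)) - (1 - a) * Real.log (1 - P τ f)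

noncomputable def G' (τ a f : ℝ) : ℝ :=
  P' τ f * (P τ f - a) / (P τ f * (1 - P τ f))

lemma hasDerivAt_G (hτ : τ ∈ Set.Ioo (0:ℝ) 1) (a f : ℝ) :
    HasDerivAt (G τ a) (G' τ a f) f := by
  have hp0 := P_pos hτ f
  have hp1 := P_lt_one hτ f
  have h1 : HasDerivAt (fun x => Real.log (P τ x)) (P' τ f / P τ f) f :=
    (hasDerivAt_P τ f).log (ne_of_gt hp0)
  have h2 : HasDerivAt (fun x => Real.log (1 - P τ x)) (-(P' τ f) / (1 - P τ f)) f :=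
    ((hasDerivAt_P τ f).const_sub 1).log (by linarith)
  have h3 := ((h1.const_mul a).neg).sub (h2.const_mul (1 - a))
  refine h3.congr_deriv ?_
  unfold G'
  have h4 : P τ f ≠ 0 := ne_of_gt hp0
  have h5 : (1:ℝ) - P τ f ≠ 0 := by linarith
  field_simp
  ring

lemma abs_G'_le (hτ : τ ∈ Set.Ioo (0:ℝ) 1) (a f : ℝ) :
    |G' τ a f| ≤ |P τ f - a| := by
  have hp0 := P_pos hτ f
  have hp1 := P_lt_one hτ f
  have hd : (0:ℝ) < P τ f * (1 - P τ f) := by nlinarith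
  have h1 := P'_le_P_mul hτ f
  have h2 := (P'_pos hτ f).le
  unfold G'
  rw [abs_div, abs_of_pos hd, div_le_iff₀ hd, abs_mul, abs_of_nonneg h2]
  calc P' τ f * |P τ f - a| ≤ (P τ f * (1 - P τ f)) * |P τ f - a| :=
        mul_le_mul_of_nonneg_right h1 (abs_nonneg _)
    _ = |P τ f - a| * (P τ f * (1 - P τ f)) := by ring

lemma G'_ge (hτ : τ ∈ Set.Ioo (0:ℝ) 1) {a f : ℝ} (h : a ≤ P τ f) :
    4 * P' τ f * (P τ f - a) ≤ G' τ a f := by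
  have hp0 := P_pos hτ f
  have hp1 := P_lt_one hτ f
  have hd : (0:ℝ) < P τ f * (1 - P τ f) := by nlinarith
  have hd4 : P τ f * (1 - P τ f) ≤ 1/4 := by nlinarith [sq_nonneg (P τ f - 1/2)]
  have h2 := P'_pos hτ f
  unfold G'
  rw [le_div_iff₀ hd]
  nlinarith [mul_nonneg h2.le (sub_nonneg.mpr h),
    mul_nonneg (mul_nonneg h2.le (sub_nonneg.mpr h)) (sub_nonneg.mpr hd4)]

lemma G'_le (hτ : τ ∈ Set.Ioo (0:ℝ) 1) {a f : ℝ} (h : P τ f ≤ a) :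
    G' τ a f ≤ 4 * P' τ f * (P τ f - a) := by
  have hp0 := P_pos hτ f
  have hp1 := P_lt_one hτ f
  have hd : (0:ℝ) < P τ f * (1 - P τ f) := by nlinarith
  have hd4 : P τ f * (1 - P τ f) ≤ 1/4 := by nlinarith [sq_nonneg (P τ f - 1/2)]
  have h2 := P'_pos hτ f
  unfold G'
  rw [div_le_iff₀ hd]
  nlinarith [mul_nonneg h2.le (sub_nonneg.mpr h),
    mul_nonneg (mul_nonneg h2.le (sub_nonneg.mpr h)) (sub_nonneg.mpr hd4)]

lemma le_of_deriv_nonneg {h h' : ℝ → ℝ} (hd : ∀ x, HasDerivAt h (h' x) x)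
    {a b : ℝ} (hab : a ≤ b) (hnn : ∀ x ∈ Set.Icc a b, 0 ≤ h' x) :
    h a ≤ h b := by
  have hmono : MonotoneOn h (Set.Icc a b) := by
    apply monotoneOn_of_deriv_nonneg (convex_Icc a b)
    · exact fun x _ => (hd x).continuousAt.continuousWithinAt
    · exact fun x _ => ((hd x).differentiableAt).differentiableWithinAt
    · intro x hx
      rw [(hd x).deriv]
      exact hnn x (Set.mem_Icc_of_Ioo (by rwa [interior_Icc] at hx))
  exact hmono (Set.left_mem_Icc.mpr hab) (Set.right_mem_Icc.mpr hab) hab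

lemma le_of_deriv_nonpos {h h' : ℝ → ℝ} (hd : ∀ x, HasDerivAt h (h' x) x)
    {a b : ℝ} (hab : a ≤ b) (hnp : ∀ x ∈ Set.Icc a b, h' x ≤ 0) :
    h b ≤ h a := by
  have := le_of_deriv_nonneg (h := fun x => -h x) (h' := fun x => -h' x)
    (fun x => (hd x).neg) hab (fun x hx => neg_nonneg.mpr (hnp x hx))
  simpa using this

lemma P_mono (hτ : τ ∈ Set.Ioo (0:ℝ) 1) {x y : ℝ} (hxy : x ≤ y) :
    P τ x ≤ P τ y :=
  le_of_deriv_nonneg (hasDerivAt_P τ) hxy (fun z _ => (P'_pos hτ z).le)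

lemma P_lip (hτ : τ ∈ Set.Ioo (0:ℝ) 1) {x y : ℝ} (hxy : x ≤ y) :
    P τ y - P τ x ≤ τ * (1 - τ) * (y - x) := by
  have h := le_of_deriv_nonneg (h := fun z => τ * (1 - τ) * z - P τ z)
    (h' := fun z => τ * (1 - τ) - P' τ z)
    (fun z => by

      exact (((hasDerivAt_id z).const_mul (τ * (1 - τ))).sub (hasDerivAt_P τ z)).congr_deriv (by ring))
    hxy (fun z _ => sub_nonneg.mpr (P'_le hτ z))
  linarith

lemma P_lip_lower (hτ : τ ∈ Set.Ioo (0:ℝ) 1) {M x y : ℝ}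
    (hx : x ∈ Set.Icc (-M) M) (hy : y ∈ Set.Icc (-M) M) (hxy : x ≤ y) :
    τ * (1 - τ) * Real.exp (-M) * (y - x) ≤ P τ y - P τ x := by
  have h := le_of_deriv_nonneg (h := fun z => P τ z - τ * (1 - τ) * Real.exp (-M) * z)
    (h' := fun z => P' τ z - τ * (1 - τ) * Real.exp (-M))
    (fun z => by
      exact ((hasDerivAt_P τ z).sub ((hasDerivAt_id z).const_mul
        (τ * (1 - τ) * Real.exp (-M)))).congr_deriv (by ring))
    hxy (fun z hz => by
      have hzM : |z| ≤ M := by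
        rw [abs_le]
        constructor
        · linarith [hz.1, hx.1]
        · linarith [hz.2, hy.2]
      exact sub_nonneg.mpr (P'_ge hτ hzM))
  linarith

end BQRaux

open BQRaux

theorem bqr_excess_risk_curvature (τ M : ℝ) (hτ : τ ∈ Set.Ioo (0:ℝ) 1) (hM : 0 < M)
    (p : ℝ → ℝ)
    (hp : ∀ z, p z = if 0 ≤ z then 1 - τ * Real.exp ((τ - 1) * z)
                     else (1 - τ) * Real.exp (τ * z))
    (E : ℝ → ℝ → ℝ)
    (hE : ∀ f fstar, E f fstar =
      -(p fstar * Real.log (p f / p fstar))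
        - (1 - p fstar) * Real.log ((1 - p f) / (1 - p fstar))) :
    ∃ c₁ c₂ : ℝ, 0 < c₁ ∧ 0 < c₂ ∧ c₂ = τ * (1 - τ) / 2 ∧
      ∀ f ∈ Set.Icc (-M) M, ∀ fstar ∈ Set.Icc (-M) M,
        c₁ * (f - fstar)^2 ≤ E f fstar ∧ E f fstar ≤ c₂ * (f - fstar)^2 := by
  obtain ⟨ht0, ht1⟩ := hτ
  have hτ' : τ ∈ Set.Ioo (0:ℝ) 1 := ⟨ht0, ht1⟩
  have hpP : p = P τ := funext fun z => by rw [hp]; rfl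
  subst hpP
  set m : ℝ := τ * (1 - τ) * Real.exp (-M) with hm_def
  have hm : 0 < m := by
    rw [hm_def]
    exact mul_pos (mul_pos ht0 (by linarith)) (Real.exp_pos _)
  refine ⟨2 * m ^ 2, τ * (1 - τ) / 2, by positivity, by nlinarith, rfl, ?_⟩
  intro f hf fstar hfstar
  set a : ℝ := P τ fstar with ha_def
  have hEG : E f fstar = G τ a f - G τ a fstar := by
    rw [hE]
    have h0f := P_pos hτ' f
    have h0s := P_pos hτ' fstar
    have h1f := P_lt_one hτ' f
    have h1s := P_lt_one hτ' fstar
    unfold G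
    rw [Real.log_div (ne_of_gt h0f) (ne_of_gt h0s),
      Real.log_div (by linarith : (1:ℝ) - P τ f ≠ 0) (by linarith : (1:ℝ) - P τ fstar ≠ 0)]
    ring
  -- derivative of the quadratic comparison functions
  have hsq : ∀ c x : ℝ, HasDerivAt (fun y : ℝ => c * (y - fstar) ^ 2)
      (2 * c * (x - fstar)) x := by
    intro c x
    have h := (((hasDerivAt_id x).sub_const fstar).pow 2).const_mul c
    refine h.congr_deriv ?_
    norm_num
    ring
  have hIccM : ∀ x : ℝ, fstar ≤ x ∨ x ≤ fstar → x ∈ Set.Icc fstar f ∪ Set.Icc f fstar →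
      |x| ≤ M := by
    intro x _ hx
    rw [abs_le]
    rcases hx with hx | hx
    · exact ⟨by linarith [hx.1, hfstar.1], by linarith [hx.2, hf.2]⟩
    · exact ⟨by linarith [hx.1, hf.1], by linarith [hx.2, hfstar.2]⟩
  rcases le_total fstar f with hcase | hcase
  · -- fstar ≤ f
    constructor
    · -- lower bound
      have key := le_of_deriv_nonneg
        (h := fun x => G τ a x - 2 * m ^ 2 * (x - fstar) ^ 2)
        (h' := fun x => G' τ a x - 2 * (2 * m ^ 2) * (x - fstar))
        (fun x => (hasDerivAt_G hτ' a x).sub (hsq (2 * m ^ 2) x)) hcase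
        (fun x hx => by
          have hxM : |x| ≤ M := hIccM x (Or.inl hx.1) (Or.inl hx)
          have hxI : x ∈ Set.Icc (-M) M := abs_le.mp hxM
          have hPge : m ≤ P' τ x := P'_ge hτ' hxM
          have hPl : m * (x - fstar) ≤ P τ x - a := P_lip_lower hτ' hfstar hxI hx.1
          have hmono : a ≤ P τ x := P_mono hτ' hx.1
          have hg := G'_ge hτ' hmono
          have hx1 : fstar ≤ x := hx.1
          show (0:ℝ) ≤ G' τ a x - 2 * (2 * m ^ 2) * (x - fstar)
          nlinarith [mul_nonneg (sub_nonneg.mpr hPge) (sub_nonneg.mpr hmono),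
            mul_nonneg hm.le (sub_nonneg.mpr hPl)])
      rw [hEG]
      nlinarith [key]
    · -- upper bound
      have key := le_of_deriv_nonneg
        (h := fun x => τ * (1 - τ) / 2 * (x - fstar) ^ 2 - G τ a x)
        (h' := fun x => 2 * (τ * (1 - τ) / 2) * (x - fstar) - G' τ a x)
        (fun x => (hsq (τ * (1 - τ) / 2) x).sub (hasDerivAt_G hτ' a x)) hcase
        (fun x hx => by
          have habs := abs_le.mp (abs_G'_le hτ' a x)
          have hlip := P_lip hτ' hx.1
          have hmono : a ≤ P τ x := P_mono hτ' hx.1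
          have hPa : |P τ x - a| = P τ x - a := abs_of_nonneg (by linarith)
          rw [hPa] at habs
          show (0:ℝ) ≤ 2 * (τ * (1 - τ) / 2) * (x - fstar) - G' τ a x
          have hx1 : fstar ≤ x := hx.1
          nlinarith [habs.2])
      rw [hEG]
      nlinarith [key]
  · -- f ≤ fstar
    constructor
    · -- lower bound
      have key := le_of_deriv_nonpos
        (h := fun x => G τ a x - 2 * m ^ 2 * (x - fstar) ^ 2)
        (h' := fun x => G' τ a x - 2 * (2 * m ^ 2) * (x - fstar))
        (fun x => (hasDerivAt_G hτ' a x).sub (hsq (2 * m ^ 2) x)) hcase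
        (fun x hx => by
          have hxM : |x| ≤ M := hIccM x (Or.inr hx.2) (Or.inr hx)
          have hxI : x ∈ Set.Icc (-M) M := abs_le.mp hxM
          have hPge : m ≤ P' τ x := P'_ge hτ' hxM
          have hPl : m * (fstar - x) ≤ a - P τ x := P_lip_lower hτ' hxI hfstar hx.2
          have hmono : P τ x ≤ a := P_mono hτ' hx.2
          have hg := G'_le hτ' hmono
          have hx2 : x ≤ fstar := hx.2
          show G' τ a x - 2 * (2 * m ^ 2) * (x - fstar) ≤ 0
          nlinarith [mul_nonneg (sub_nonneg.mpr hPge) (sub_nonneg.mpr hmono),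
            mul_nonneg hm.le (sub_nonneg.mpr hPl)])
      rw [hEG]
      nlinarith [key]
    · -- upper bound
      have key := le_of_deriv_nonpos
        (h := fun x => τ * (1 - τ) / 2 * (x - fstar) ^ 2 - G τ a x)
        (h' := fun x => 2 * (τ * (1 - τ) / 2) * (x - fstar) - G' τ a x)
        (fun x => (hsq (τ * (1 - τ) / 2) x).sub (hasDerivAt_G hτ' a x)) hcase
        (fun x hx => by
          have habs := abs_le.mp (abs_G'_le hτ' a x)
          have hlip := P_lip hτ' hx.2
          have hmono : P τ x ≤ a := P_mono hτ' hx.2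
          have hPa : |P τ x - a| = a - P τ x := by
            rw [abs_sub_comm]; exact abs_of_nonneg (by linarith)
          rw [hPa] at habs
          show 2 * (τ * (1 - τ) / 2) * (x - fstar) - G' τ a x ≤ 0
          have hx2 : x ≤ fstar := hx.2
          nlinarith [habs.1])
      rw [hEG]
      nlinarith [key]
end

section
/- The BQR loss L(y, z) is convex in z on each of the half-lines [0,∞) and (-∞, 0] for each y ∈ {0,1}, and moreover L(1, ·) is nonincreasing and L(0, ·) is nondecreasing on all of ℝ. -/
open Real Set

private lemma aux_hasDerivAt (a c x : ℝ) (hx : a * Real.exp (c * x) < 1) :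
    HasDerivAt (fun z => -Real.log (1 - a * Real.exp (c * z)))
      (c * (a * Real.exp (c * x)) / (1 - a * Real.exp (c * x))) x := by
  have hu : HasDerivAt (fun z => 1 - a * Real.exp (c * z)) (-(c * (a * Real.exp (c * x)))) x := by
    have h1 : HasDerivAt (fun z : ℝ => c * z) c x := by
      simpa using (hasDerivAt_id x).const_mul c
    have := ((h1.exp).const_mul a).const_sub 1
    exact this.congr_deriv (by ring)
  have hne : 1 - a * Real.exp (c * x) ≠ 0 := by linarith
  have := (hu.log hne).neg
  exact this.congr_deriv (by field_simp)

private lemma aux_hasDerivAt' (a c x : ℝ) (hx : a * Real.exp (c * x) < 1) :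
    HasDerivAt (fun z => c * (a * Real.exp (c * z)) / (1 - a * Real.exp (c * z)))
      (c ^ 2 * (a * Real.exp (c * x)) / (1 - a * Real.exp (c * x)) ^ 2) x := by
  have h1 : HasDerivAt (fun z : ℝ => c * z) c x := by
    simpa using (hasDerivAt_id x).const_mul c
  have hn : HasDerivAt (fun z => c * (a * Real.exp (c * z)))
      (c * (c * (a * Real.exp (c * x)))) x := by
    have := ((h1.exp).const_mul a).const_mul c
    exact this.congr_deriv (by ring)
  have hd : HasDerivAt (fun z => 1 - a * Real.exp (c * z)) (-(c * (a * Real.exp (c * x)))) x := by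
    have := ((h1.exp).const_mul a).const_sub 1
    exact this.congr_deriv (by ring)
  have hne : 1 - a * Real.exp (c * x) ≠ 0 := by linarith
  have := hn.div hd hne
  exact this.congr_deriv (by field_simp; ring)

private lemma aux_convexOn (a c : ℝ) (ha : 0 ≤ a) (s : Set ℝ) (hs : Convex ℝ s)
    (hlt : ∀ x ∈ s, a * Real.exp (c * x) < 1) :
    ConvexOn ℝ s (fun z => -Real.log (1 - a * Real.exp (c * z))) := by
  set F' : ℝ → ℝ := fun x => c * (a * Real.exp (c * x)) / (1 - a * Real.exp (c * x)) with hF'def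
  have hderiv : ∀ x ∈ interior s,
      deriv (fun z => -Real.log (1 - a * Real.exp (c * z))) x = F' x := fun x hx =>
    (aux_hasDerivAt a c x (hlt x (interior_subset hx))).deriv
  refine convexOn_of_deriv2_nonneg hs ?_ ?_ ?_ ?_
  · exact fun x hx =>
      (aux_hasDerivAt a c x (hlt x hx)).differentiableAt.continuousAt.continuousWithinAt
  · exact fun x hx =>
      (aux_hasDerivAt a c x (hlt x (interior_subset hx))).differentiableAt.differentiableWithinAt
  · intro x hx
    exact ((aux_hasDerivAt' a c x (hlt x (interior_subset hx))).differentiableAt.differentiableWithinAt).congr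
      (fun y hy => hderiv y hy) (hderiv x hx)
  · intro x hx
    have heq : deriv (fun z => -Real.log (1 - a * Real.exp (c * z))) =ᶠ[nhds x] F' :=
      Filter.eventuallyEq_of_mem (isOpen_interior.mem_nhds hx) hderiv
    have : deriv^[2] (fun z => -Real.log (1 - a * Real.exp (c * z))) x = deriv F' x := by
      simp only [Function.iterate_succ, Function.iterate_zero, Function.comp_apply, id]
      exact heq.deriv_eq
    rw [this, (aux_hasDerivAt' a c x (hlt x (interior_subset hx))).deriv]
    have h1 : 0 < 1 - a * Real.exp (c * x) := by
      have := hlt x (interior_subset hx); linarith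
    positivity

private lemma convexOn_affine (m b : ℝ) (s : Set ℝ) (hs : Convex ℝ s) :
    ConvexOn ℝ s (fun z => m * z + b) := by
  refine ⟨hs, ?_⟩
  intro x _ y _ u v hu hv huv
  apply le_of_eq
  have : v = 1 - u := by linarith
  subst this
  simp [smul_eq_mul]
  ring

private lemma convexOn_congr {f g : ℝ → ℝ} {s : Set ℝ} (h : ConvexOn ℝ s g)
    (he : ∀ x ∈ s, f x = g x) : ConvexOn ℝ s f := by
  refine ⟨h.1, fun x hx y hy u v hu hv huv => ?_⟩
  rw [he _ hx, he _ hy, he _ (h.1 hx hy hu hv huv)]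
  exact h.2 hx hy hu hv huv

theorem bqr_loss_convex_monotone (τ : ℝ) (hτ : τ ∈ Set.Ioo (0:ℝ) 1)
    (p : ℝ → ℝ)
    (hp : ∀ z, p z = if 0 ≤ z then 1 - τ * Real.exp ((τ - 1) * z)
                     else (1 - τ) * Real.exp (τ * z))
    (L : ℝ → ℝ → ℝ)
    (hL : ∀ y z, L y z = -(y * Real.log (p z) + (1 - y) * Real.log (1 - p z))) :
    (∀ y ∈ ({0, 1} : Set ℝ),
      ConvexOn ℝ (Set.Ici (0:ℝ)) (L y) ∧ ConvexOn ℝ (Set.Iic (0:ℝ)) (L y)) ∧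
    Antitone (L 1) ∧ Monotone (L 0) := by
  obtain ⟨hτ0, hτ1⟩ := hτ
  have hτ1' : 0 < 1 - τ := by linarith
  -- p on each half line
  have hp1 : ∀ z, 0 ≤ z → p z = 1 - τ * Real.exp ((τ - 1) * z) := fun z hz => by
    rw [hp z, if_pos hz]
  have hp2 : ∀ z, z ≤ 0 → p z = (1 - τ) * Real.exp (τ * z) := fun z hz => by
    rcases eq_or_lt_of_le hz with h | h
    · rw [h] at *; rw [hp 0, if_pos le_rfl]; simp
    · rw [hp z, if_neg (by linarith)]
  -- bounds
  have hb1 : ∀ z ∈ Set.Ici (0:ℝ), τ * Real.exp ((τ - 1) * z) < 1 := by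
    intro z hz
    have h1 : (τ - 1) * z ≤ 0 := mul_nonpos_of_nonpos_of_nonneg (by linarith) hz
    have h2 : Real.exp ((τ - 1) * z) ≤ 1 := Real.exp_le_one_iff.mpr h1
    nlinarith [Real.exp_pos ((τ - 1) * z)]
  have hb2 : ∀ z ∈ Set.Iic (0:ℝ), (1 - τ) * Real.exp (τ * z) < 1 := by
    intro z hz
    have h1 : τ * z ≤ 0 := mul_nonpos_of_nonneg_of_nonpos (le_of_lt hτ0) hz
    have h2 : Real.exp (τ * z) ≤ 1 := Real.exp_le_one_iff.mpr h1
    nlinarith [Real.exp_pos (τ * z)]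
  -- explicit formulas for L
  have hL1a : ∀ z ∈ Set.Ici (0:ℝ), L 1 z = -Real.log (1 - τ * Real.exp ((τ - 1) * z)) := by
    intro z hz
    rw [hL 1 z, hp1 z hz]; ring
  have hL1b : ∀ z ∈ Set.Iic (0:ℝ), L 1 z = (-τ) * z + (-Real.log (1 - τ)) := by
    intro z hz
    rw [hL 1 z, hp2 z hz, Real.log_mul (ne_of_gt hτ1') (Real.exp_ne_zero _), Real.log_exp]
    ring
  have hL0a : ∀ z ∈ Set.Ici (0:ℝ), L 0 z = (1 - τ) * z + (-Real.log τ) := by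
    intro z hz
    rw [hL 0 z, hp1 z hz]
    have : (1:ℝ) - (1 - τ * Real.exp ((τ - 1) * z)) = τ * Real.exp ((τ - 1) * z) := by ring
    rw [this, Real.log_mul (ne_of_gt hτ0) (Real.exp_ne_zero _), Real.log_exp]
    ring
  have hL0b : ∀ z ∈ Set.Iic (0:ℝ), L 0 z = -Real.log (1 - (1 - τ) * Real.exp (τ * z)) := by
    intro z hz
    rw [hL 0 z, hp2 z hz]; ring
  -- convexity
  have hc1a : ConvexOn ℝ (Set.Ici (0:ℝ)) (L 1) :=
    convexOn_congr (aux_convexOn τ (τ - 1) (le_of_lt hτ0) _ (convex_Ici 0) hb1) hL1a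
  have hc1b : ConvexOn ℝ (Set.Iic (0:ℝ)) (L 1) :=
    convexOn_congr (convexOn_affine (-τ) (-Real.log (1 - τ)) _ (convex_Iic 0)) hL1b
  have hc0a : ConvexOn ℝ (Set.Ici (0:ℝ)) (L 0) :=
    convexOn_congr (convexOn_affine (1 - τ) (-Real.log τ) _ (convex_Ici 0)) hL0a
  have hc0b : ConvexOn ℝ (Set.Iic (0:ℝ)) (L 0) :=
    convexOn_congr (aux_convexOn (1 - τ) τ (le_of_lt hτ1') _ (convex_Iic 0) hb2) hL0b
  -- monotonicity on half lines
  have hm1a : AntitoneOn (L 1) (Set.Ici (0:ℝ)) := by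
    have key : AntitoneOn (fun z => -Real.log (1 - τ * Real.exp ((τ - 1) * z))) (Set.Ici (0:ℝ)) := by
      refine antitoneOn_of_deriv_nonpos (convex_Ici 0) ?_ ?_ ?_
      · exact fun x hx =>
          (aux_hasDerivAt τ (τ - 1) x (hb1 x hx)).differentiableAt.continuousAt.continuousWithinAt
      · exact fun x hx =>
          (aux_hasDerivAt τ (τ - 1) x (hb1 x (interior_subset hx))).differentiableAt.differentiableWithinAt
      · intro x hx
        rw [(aux_hasDerivAt τ (τ - 1) x (hb1 x (interior_subset hx))).deriv]
        have h1 : 0 < 1 - τ * Real.exp ((τ - 1) * x) := by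
          have := hb1 x (interior_subset hx); linarith
        apply div_nonpos_of_nonpos_of_nonneg _ (le_of_lt h1)
        have : 0 < τ * Real.exp ((τ - 1) * x) := by positivity
        nlinarith
    intro x hx y hy hxy
    rw [hL1a x hx, hL1a y hy]
    exact key hx hy hxy
  have hm1b : AntitoneOn (L 1) (Set.Iic (0:ℝ)) := by
    intro x hx y hy hxy
    rw [hL1b x hx, hL1b y hy]
    nlinarith
  have hm0a : MonotoneOn (L 0) (Set.Ici (0:ℝ)) := by
    intro x hx y hy hxy
    rw [hL0a x hx, hL0a y hy]
    nlinarith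
  have hm0b : MonotoneOn (L 0) (Set.Iic (0:ℝ)) := by
    have key : MonotoneOn (fun z => -Real.log (1 - (1 - τ) * Real.exp (τ * z))) (Set.Iic (0:ℝ)) := by
      refine monotoneOn_of_deriv_nonneg (convex_Iic 0) ?_ ?_ ?_
      · exact fun x hx =>
          (aux_hasDerivAt (1 - τ) τ x (hb2 x hx)).differentiableAt.continuousAt.continuousWithinAt
      · exact fun x hx =>
          (aux_hasDerivAt (1 - τ) τ x (hb2 x (interior_subset hx))).differentiableAt.differentiableWithinAt
      · intro x hx
        rw [(aux_hasDerivAt (1 - τ) τ x (hb2 x (interior_subset hx))).deriv]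
        have h1 : 0 < 1 - (1 - τ) * Real.exp (τ * x) := by
          have := hb2 x (interior_subset hx); linarith
        apply div_nonneg _ (le_of_lt h1)
        positivity
    intro x hx y hy hxy
    rw [hL0b x hx, hL0b y hy]
    exact key hx hy hxy
  refine ⟨?_, ?_, ?_⟩
  · rintro y (rfl | rfl)
    · exact ⟨hc0a, hc0b⟩
    · exact ⟨hc1a, hc1b⟩
  · intro x y hxy
    rcases le_total 0 x with h | h
    · exact hm1a h (le_trans h hxy) hxy
    · rcases le_total y 0 with h' | h'
      · exact hm1b h h' hxy
      · exact le_trans (hm1a Set.self_mem_Ici h' h') (hm1b h Set.self_mem_Iic h)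
  · intro x y hxy
    rcases le_total 0 x with h | h
    · exact hm0a h (le_trans h hxy) hxy
    · rcases le_total y 0 with h' | h'
      · exact hm0b h h' hxy
      · exact le_trans (hm0b h Set.self_mem_Iic h) (hm0a Set.self_mem_Ici h' h')
end
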